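/- (Theorem 2) Let N ≥ 2, let A be an irreducible N×N matrix satisfying Condition A1 (the coupling matrix, possibly unknown), let Ã = (ã_{ij}) be any irreducible N×N matrix satisfying Condition A2, let Γ = diag(γ_1,…,γ_n) be positive definite, and suppose f : ℝ^n × ℝ⁺ → ℝ^n is continuous and belongs to QUAD(Δ,ϖ) for some diagonal Δ and ϖ > 0. Let α > 0 and let x_1,…,x_N : [0,∞) → ℝ^n and c : [0,∞) → ℝ be differentiable functions satisfying, for all t ≥ 0, ẋ_i(t) = f(x_i(t),t) + c(t) Σ_{j≠i} a_{ij} Γ (x_j(t) − x_i(t)), ċ(t) = −(α/2) Σ_{i,j} ã_{ij} x_i(t)^T x_j(t), and c(0) = 0. Then ‖x_i(t) − x_j(t)‖ → 0 as t → ∞ for all i, j, and c(t) converges to a finite limit. -/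

import Mathlib

set_option maxHeartbeats 2000000

open Finset Filter MeasureTheory intervalIntegral

open Finset

lemma exists_pos_left_eigen {N : ℕ} (A : Matrix (Fin N) (Fin N) ℝ) [NeZero N]
    (hoff : ∀ i j, i ≠ j → 0 ≤ A i j)
    (hrow : ∀ i, ∑ j, A i j = 0)
    (hirr : ∀ S : Finset (Fin N), S.Nonempty → S ≠ Finset.univ →
      ∃ i ∈ S, ∃ j, j ∉ S ∧ A i j ≠ 0) :
    ∃ ξ : Fin N → ℝ, (∀ i, 0 < ξ i) ∧ ∀ j, ∑ i, ξ i * A i j = 0 := by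
  classical
  -- det A = 0 since A.mulVec 1 = 0
  have hdet : A.det = 0 := by
    rw [← Matrix.exists_mulVec_eq_zero_iff]
    refine ⟨fun _ => 1, ?_, ?_⟩
    · intro h
      have := congrFun h ⟨0, Nat.pos_of_ne_zero (NeZero.ne N)⟩
      simp at this
    · funext i
      simp [Matrix.mulVec, dotProduct, hrow i]
  have hdetT : A.transpose.det = 0 := by rwa [Matrix.det_transpose]
  obtain ⟨v, hv0, hv⟩ := Matrix.exists_mulVec_eq_zero_iff.mpr hdetT
  have hvj : ∀ j, ∑ i, v i * A i j = 0 := by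
    intro j
    have := congrFun hv j
    simpa [Matrix.mulVec, dotProduct, Matrix.transpose, mul_comm] using this
  -- wlog some entry positive
  have hex : ∃ w : Fin N → ℝ, (∃ i, 0 < w i) ∧ ∀ j, ∑ i, w i * A i j = 0 := by
    obtain ⟨i0, hi0⟩ := Function.ne_iff.mp hv0
    rcases lt_or_gt_of_ne (show v i0 ≠ 0 by simpa using hi0) with h | h
    · refine ⟨-v, ⟨i0, by simpa using h⟩, fun j => ?_⟩
      have h2 := hvj j
      simp only [Pi.neg_apply, neg_mul]
      rw [Finset.sum_neg_distrib, h2, neg_zero]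
    · exact ⟨v, ⟨i0, h⟩, hvj⟩
  obtain ⟨w, ⟨ip, hip⟩, hw⟩ := hex
  set P : Finset (Fin N) := Finset.univ.filter (fun i => 0 < w i) with hP
  have hPne : P.Nonempty := ⟨ip, by simp [hP, hip]⟩
  have hPuniv : P = Finset.univ := by
    by_contra hne
    obtain ⟨i0, hi0P, j0, hj0P, hA0⟩ := hirr P hPne hne
    -- 0 = ∑ i, w i * ∑ j in P, A i j  will be shown < 0
    have key : ∑ i, w i * ∑ j ∈ P, A i j = 0 := by
      simp_rw [Finset.mul_sum]
      rw [Finset.sum_comm]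
      simp [hw]
    have hterm : ∀ i ∈ Finset.univ, w i * ∑ j ∈ P, A i j ≤ 0 := by
      intro i _
      by_cases hiP : i ∈ P
      · have hwi : 0 < w i := by simpa [hP] using hiP
        have hsplit : ∑ j ∈ P, A i j = - ∑ j ∈ Pᶜ, A i j := by
          have := hrow i
          rw [← Finset.sum_add_sum_compl P (A i)] at this
          linarith
        have hc : 0 ≤ ∑ j ∈ Pᶜ, A i j :=
          Finset.sum_nonneg fun j hj => hoff i j (by rintro rfl; exact (Finset.mem_compl.mp hj) hiP)
        nlinarith
      · have hwi : w i ≤ 0 := by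
          have : ¬ 0 < w i := by simpa [hP] using hiP
          linarith
        have hc : 0 ≤ ∑ j ∈ P, A i j :=
          Finset.sum_nonneg fun j hj => hoff i j (by rintro rfl; exact hiP hj)
        exact mul_nonpos_of_nonpos_of_nonneg hwi hc
    have hstrict : w i0 * ∑ j ∈ P, A i0 j < 0 := by
      have hwi : 0 < w i0 := by simpa [hP] using hi0P
      have hsplit : ∑ j ∈ P, A i0 j = - ∑ j ∈ Pᶜ, A i0 j := by
        have := hrow i0
        rw [← Finset.sum_add_sum_compl P (A i0)] at this
        linarith
      have hpos : 0 < ∑ j ∈ Pᶜ, A i0 j := by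
        have h1 : 0 < A i0 j0 := by
          rcases lt_or_eq_of_le (hoff i0 j0 (by rintro rfl; exact hj0P hi0P)) with h | h
          · exact h
          · exact absurd h.symm hA0
        refine lt_of_lt_of_le h1 (Finset.single_le_sum (f := A i0) ?_ (Finset.mem_compl.mpr hj0P))
        intro j hj
        exact hoff i0 j (by rintro rfl; exact (Finset.mem_compl.mp hj) hi0P)
      nlinarith
    have : ∑ i, w i * ∑ j ∈ P, A i j < 0 := by
      calc ∑ i, w i * ∑ j ∈ P, A i j < ∑ _i : Fin N, (0:ℝ) :=
            Finset.sum_lt_sum hterm ⟨i0, Finset.mem_univ i0, hstrict⟩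
        _ = 0 := by simp
    linarith [key]
  refine ⟨w, fun i => ?_, hw⟩
  have : i ∈ P := hPuniv ▸ Finset.mem_univ i
  simpa [hP] using this
open Finset

lemma quad_form_eq {N : ℕ} (C : Matrix (Fin N) (Fin N) ℝ)
    (hsym : ∀ i j, C i j = C j i) (hrow : ∀ i, ∑ j, C i j = 0) (v : Fin N → ℝ) :
    ∑ i, ∑ j, C i j * v i * v j = -(1/2) * ∑ i, ∑ j, C i j * (v i - v j)^2 := by
  have hcol : ∀ j, ∑ i, C i j = 0 := by
    intro j
    rw [Finset.sum_congr rfl (fun i _ => hsym i j)]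
    exact hrow j
  have h1 : ∑ i, ∑ j, C i j * v i ^ 2 = 0 := by
    refine Finset.sum_eq_zero fun i _ => ?_
    rw [← Finset.sum_mul, hrow i, zero_mul]
  have h2 : ∑ i, ∑ j, C i j * v j ^ 2 = 0 := by
    rw [Finset.sum_comm]
    refine Finset.sum_eq_zero fun j _ => ?_
    rw [← Finset.sum_mul, hcol j, zero_mul]
  have expand : ∑ i, ∑ j, C i j * (v i - v j)^2
      = (∑ i, ∑ j, C i j * v i ^ 2) + (∑ i, ∑ j, C i j * v j ^ 2)
        - 2 * ∑ i, ∑ j, C i j * v i * v j := by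
    rw [← Finset.sum_add_distrib, Finset.mul_sum, ← Finset.sum_sub_distrib]
    refine Finset.sum_congr rfl fun i _ => ?_
    rw [← Finset.sum_add_distrib, Finset.mul_sum, ← Finset.sum_sub_distrib]
    refine Finset.sum_congr rfl fun j _ => ?_
    ring
  rw [expand, h1, h2]
  ring

lemma quad_form_nonpos {N : ℕ} (C : Matrix (Fin N) (Fin N) ℝ)
    (hsym : ∀ i j, C i j = C j i) (hoff : ∀ i j, i ≠ j → 0 ≤ C i j)
    (hrow : ∀ i, ∑ j, C i j = 0) (v : Fin N → ℝ) :
    ∑ i, ∑ j, C i j * v i * v j ≤ 0 := by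
  rw [quad_form_eq C hsym hrow v]
  have : (0:ℝ) ≤ ∑ i, ∑ j, C i j * (v i - v j)^2 := by
    refine Finset.sum_nonneg fun i _ => Finset.sum_nonneg fun j _ => ?_
    by_cases h : i = j
    · subst h; simp
    · exact mul_nonneg (hoff i j h) (sq_nonneg _)
  linarith

lemma spectral_gap {N : ℕ} (hN : 2 ≤ N) (C : Matrix (Fin N) (Fin N) ℝ)
    (hsym : ∀ i j, C i j = C j i) (hoff : ∀ i j, i ≠ j → 0 ≤ C i j)
    (hrow : ∀ i, ∑ j, C i j = 0)
    (hirr : ∀ S : Finset (Fin N), S.Nonempty → S ≠ Finset.univ →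
      ∃ i ∈ S, ∃ j, j ∉ S ∧ C i j ≠ 0)
    (w : Fin N → ℝ) (hw : ∀ i, 0 < w i) :
    ∃ lam : ℝ, 0 < lam ∧ ∀ v : Fin N → ℝ, ∑ i, w i * v i = 0 →
      ∑ i, ∑ j, C i j * v i * v j ≤ -lam * ∑ i, v i ^ 2 := by
  classical
  haveI : NeZero N := ⟨by omega⟩
  set K : Set (Fin N → ℝ) := {v | ∑ i, v i ^ 2 = 1 ∧ ∑ i, w i * v i = 0} with hK
  have hcont1 : Continuous fun v : Fin N → ℝ => ∑ i, v i ^ 2 :=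
    continuous_finset_sum _ fun i _ => (continuous_apply i).pow 2
  have hcont2 : Continuous fun v : Fin N → ℝ => ∑ i, w i * v i :=
    continuous_finset_sum _ fun i _ => continuous_const.mul (continuous_apply i)
  have hg : Continuous fun v : Fin N → ℝ => -∑ i, ∑ j, C i j * v i * v j := by
    refine Continuous.neg ?_
    refine continuous_finset_sum _ fun i _ => continuous_finset_sum _ fun j _ => ?_
    exact ((continuous_const.mul (continuous_apply i)).mul (continuous_apply j))
  have hKclosed : IsClosed K := by
    exact (isClosed_eq hcont1 continuous_const).inter (isClosed_eq hcont2 continuous_const)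
  have hKbdd : Bornology.IsBounded K := by
    rw [Metric.isBounded_iff_subset_closedBall 0]
    refine ⟨1, fun v hv => ?_⟩
    rw [Metric.mem_closedBall, dist_zero_right]
    rw [pi_norm_le_iff_of_nonneg (by norm_num)]
    intro i
    have h1 : v i ^ 2 ≤ 1 := by
      calc v i ^ 2 ≤ ∑ j, v j ^ 2 :=
            Finset.single_le_sum (f := fun j => v j ^ 2) (fun j _ => sq_nonneg _) (Finset.mem_univ i)
        _ = 1 := hv.1
    rw [Real.norm_eq_abs]
    nlinarith [sq_abs (v i), abs_nonneg (v i)]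
  have hKcompact : IsCompact K := Metric.isCompact_of_isClosed_isBounded hKclosed hKbdd
  have h01 : (⟨0, by omega⟩ : Fin N) ≠ ⟨1, by omega⟩ := by
    intro h; simpa using congrArg Fin.val h
  set i0 : Fin N := ⟨0, by omega⟩ with hi0
  set i1 : Fin N := ⟨1, by omega⟩ with hi1
  have hsum2 : ∀ (X Y : ℝ), ∑ i, (if i = i0 then X else if i = i1 then Y else 0) = X + Y := by
    intro X Y
    have hpt : ∀ i, (if i = i0 then X else if i = i1 then Y else 0)
        = (if i = i0 then X else 0) + (if i = i1 then Y else 0) := by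
      intro i
      by_cases h0 : i = i0
      · subst h0; simp [h01]
      · by_cases h1 : i = i1
        · subst h1; simp [h0]
        · simp [h0, h1]
    simp_rw [hpt]
    rw [Finset.sum_add_distrib, Finset.sum_ite_eq' Finset.univ i0 (fun _ => X),
      Finset.sum_ite_eq' Finset.univ i1 (fun _ => Y)]
    simp
  have hKne : K.Nonempty := by
    set r : ℝ := Real.sqrt (w i0 ^ 2 + w i1 ^ 2) with hr0
    have hrpos : 0 < r := Real.sqrt_pos.mpr (by nlinarith [hw i0, hw i1])
    have hr2 : r ^ 2 = w i0 ^ 2 + w i1 ^ 2 := Real.sq_sqrt (by nlinarith [hw i0, hw i1])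
    refine ⟨fun i => if i = i0 then w i1 / r else if i = i1 then -w i0 / r else 0, ?_, ?_⟩
    · show (∑ i, _) = 1
      have hpt : ∀ i : Fin N, (if i = i0 then w i1 / r else if i = i1 then -w i0 / r else 0) ^ 2
          = (if i = i0 then (w i1 / r)^2 else if i = i1 then (-w i0 / r)^2 else 0) := by
        intro i
        by_cases h0 : i = i0
        · subst h0; simp [h01]
        · by_cases h1 : i = i1
          · subst h1; simp [h0]
          · simp [h0, h1]
      rw [Finset.sum_congr rfl (fun i _ => hpt i), hsum2]
      field_simp
      linarith [hr2]
    · show (∑ i, _) = 0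
      have hpt : ∀ i : Fin N, w i * (if i = i0 then w i1 / r else if i = i1 then -w i0 / r else 0)
          = (if i = i0 then w i0 * (w i1 / r) else if i = i1 then w i1 * (-w i0 / r) else 0) := by
        intro i
        by_cases h0 : i = i0
        · subst h0; simp [h01]
        · by_cases h1 : i = i1
          · subst h1; simp [h0]
          · simp [h0, h1]
      rw [Finset.sum_congr rfl (fun i _ => hpt i), hsum2]
      ring
  -- minimum attained
  obtain ⟨v0, hv0K, hv0min⟩ := hKcompact.exists_isMinOn hKne hg.continuousOn
  set lam : ℝ := -∑ i, ∑ j, C i j * v0 i * v0 j with hlam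
  have hlam_nonneg : 0 ≤ lam := by
    have := quad_form_nonpos C hsym hoff hrow v0
    simp only [hlam]; linarith
  have hlam_pos : 0 < lam := by
    rcases lt_or_eq_of_le hlam_nonneg with h | h
    · exact h
    -- lam = 0: contradiction via irreducibility
    exfalso
    have hq0 : ∑ i, ∑ j, C i j * (v0 i - v0 j) ^ 2 = 0 := by
      have := quad_form_eq C hsym hrow v0
      simp only [hlam] at h
      rw [this] at h
      linarith
    have hterm : ∀ i, ∀ j, C i j * (v0 i - v0 j) ^ 2 = 0 := by
      have hnn : ∀ i ∈ Finset.univ, ∀ j ∈ (Finset.univ : Finset (Fin N)),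
          (0:ℝ) ≤ C i j * (v0 i - v0 j) ^ 2 := by
        intro i _ j _
        by_cases hij : i = j
        · subst hij; simp
        · exact mul_nonneg (hoff i j hij) (sq_nonneg _)
      have h1 := (Finset.sum_eq_zero_iff_of_nonneg
        (fun i _ => Finset.sum_nonneg (hnn i (Finset.mem_univ i)))).mp hq0
      intro i j
      have h2 := (Finset.sum_eq_zero_iff_of_nonneg (hnn i (Finset.mem_univ i))).mp
        (h1 i (Finset.mem_univ i))
      exact h2 j (Finset.mem_univ j)
    -- max principle: v0 constant
    obtain ⟨im, _, him⟩ := Finset.exists_max_image Finset.univ v0 ⟨i0, Finset.mem_univ i0⟩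
    set S : Finset (Fin N) := Finset.univ.filter (fun i => v0 i = v0 im) with hS
    have hSuniv : S = Finset.univ := by
      by_contra hne
      obtain ⟨i, hiS, j, hjS, hCij⟩ := hirr S ⟨im, by simp [hS]⟩ hne
      have hij : i ≠ j := by rintro rfl; exact hjS hiS
      have hCpos : 0 < C i j := lt_of_le_of_ne (hoff i j hij) (Ne.symm hCij)
      have := hterm i j
      have hsq : (v0 i - v0 j) ^ 2 = 0 := by
        rcases mul_eq_zero.mp this with h' | h'
        · exact absurd h' hCij
        · exact h'
      have hvij : v0 i = v0 j := by
        have := pow_eq_zero_iff (n := 2) (by norm_num) |>.mp hsq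
        linarith [sub_eq_zero.mp this]
      have : v0 j = v0 im := by
        have hvi : v0 i = v0 im := by simpa [hS] using hiS
        rw [← hvij, hvi]
      exact hjS (by simp [hS, this])
    have hconst : ∀ i, v0 i = v0 im := fun i => by
      have : i ∈ S := hSuniv ▸ Finset.mem_univ i
      simpa [hS] using this
    have hwsum : ∑ i, w i * v0 i = v0 im * ∑ i, w i := by
      rw [Finset.mul_sum]
      exact Finset.sum_congr rfl fun i _ => by rw [hconst i]; ring
    have hwpos : 0 < ∑ i, w i := Finset.sum_pos (fun i _ => hw i) ⟨i0, Finset.mem_univ i0⟩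
    have hv0im : v0 im = 0 := by
      have h2 := hv0K.2
      rw [hwsum] at h2
      rcases mul_eq_zero.mp h2 with h3 | h3
      · exact h3
      · linarith
    have : ∑ i, v0 i ^ 2 = 0 :=
      Finset.sum_eq_zero fun i _ => by rw [hconst i, hv0im]; ring
    rw [hv0K.1] at this
    norm_num at this
  refine ⟨lam, hlam_pos, fun v hv => ?_⟩
  by_cases hvz : ∑ i, v i ^ 2 = 0
  · have hz : ∀ i, v i = 0 := by
      intro i
      have h1 := (Finset.sum_eq_zero_iff_of_nonneg (fun i _ => sq_nonneg (v i))).mp hvz i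
        (Finset.mem_univ i)
      exact pow_eq_zero_iff (by norm_num) |>.mp h1
    have : ∑ i, ∑ j, C i j * v i * v j = 0 :=
      Finset.sum_eq_zero fun i _ => Finset.sum_eq_zero fun j _ => by rw [hz i]; ring
    rw [this, hvz]
    simp
  · have hvpos : 0 < ∑ i, v i ^ 2 :=
      lt_of_le_of_ne (Finset.sum_nonneg fun i _ => sq_nonneg _) (Ne.symm hvz)
    set r : ℝ := Real.sqrt (∑ i, v i ^ 2) with hr0
    have hrpos : 0 < r := Real.sqrt_pos.mpr hvpos
    have hr2 : r ^ 2 = ∑ i, v i ^ 2 := Real.sq_sqrt (le_of_lt hvpos)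
    set u : Fin N → ℝ := fun i => v i / r with hu
    have huK : u ∈ K := by
      constructor
      · show (∑ i, (v i / r) ^ 2) = 1
        have : ∀ i : Fin N, (v i / r) ^ 2 = v i ^ 2 * (r^2)⁻¹ := fun i => by
          field_simp
        rw [Finset.sum_congr rfl fun i _ => this i, ← Finset.sum_mul, hr2]
        field_simp
      · show (∑ i, w i * (v i / r)) = 0
        have : ∀ i : Fin N, w i * (v i / r) = (w i * v i) * r⁻¹ := fun i => by ring
        rw [Finset.sum_congr rfl fun i _ => this i, ← Finset.sum_mul, hv, zero_mul]
    have hmin := hv0min huK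
    simp only [Set.mem_setOf_eq] at hmin
    -- hmin : -(∑∑ C u u) ≥ lam  i.e.  lam ≤ -∑∑ C u u
    have hscale : ∑ i, ∑ j, C i j * v i * v j = r^2 * ∑ i, ∑ j, C i j * u i * u j := by
      rw [Finset.mul_sum]
      refine Finset.sum_congr rfl fun i _ => ?_
      rw [Finset.mul_sum]
      refine Finset.sum_congr rfl fun j _ => ?_
      simp only [hu]
      field_simp
    have h2 : ∑ i, ∑ j, C i j * u i * u j ≤ -lam := by
      have : lam ≤ -∑ i, ∑ j, C i j * u i * u j := hmin
      linarith
    rw [hscale, ← hr2] at *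
    nlinarith [hr2, hvpos]
open Filter MeasureTheory intervalIntegral

lemma tendsto_of_monotoneOn_bdd (c : ℝ → ℝ) (B : ℝ)
    (hmono : MonotoneOn c (Set.Ici 0)) (hbdd : ∀ t, 0 ≤ t → c t ≤ B) :
    ∃ c₀ : ℝ, Tendsto c atTop (nhds c₀) := by
  set s : Set ℝ := c '' Set.Ici 0 with hs
  have hsne : s.Nonempty := ⟨c 0, ⟨0, Set.mem_Ici.mpr (le_refl 0), rfl⟩⟩
  have hsbdd : BddAbove s := ⟨B, by rintro y ⟨t, ht, rfl⟩; exact hbdd t ht⟩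
  refine ⟨sSup s, ?_⟩
  rw [Metric.tendsto_atTop]
  intro ε hε
  obtain ⟨y, hy, hlt⟩ := exists_lt_of_lt_csSup hsne (show sSup s - ε < sSup s by linarith)
  obtain ⟨T, hT, rfl⟩ := hy
  refine ⟨T, fun t ht => ?_⟩
  have ht0 : (0:ℝ) ≤ t := le_trans hT ht
  have h1 : c T ≤ c t := hmono hT ht0 ht
  have h2 : c t ≤ sSup s := le_csSup hsbdd ⟨t, ht0, rfl⟩
  rw [Real.dist_eq, abs_lt]
  constructor <;> linarith

lemma barbalat_one_sided (g g' : ℝ → ℝ) (K I : ℝ) (hK : 0 < K)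
    (hderiv : ∀ t, 0 ≤ t → HasDerivAt g (g' t) t)
    (hnn : ∀ t, 0 ≤ t → 0 ≤ g t)
    (hub : ∀ t, 0 ≤ t → g' t ≤ K)
    (hint : ∀ T, 0 ≤ T → (∫ t in (0:ℝ)..T, g t) ≤ I) :
    Tendsto g atTop (nhds 0) := by
  have hcontAt : ∀ t, 0 ≤ t → ContinuousAt g t := fun t ht => (hderiv t ht).continuousAt
  have hii : ∀ a b : ℝ, 0 ≤ a → a ≤ b → IntervalIntegrable g volume a b := by
    intro a b ha hab
    refine ContinuousOn.intervalIntegrable ?_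
    intro u hu
    rw [Set.uIcc_of_le hab] at hu
    exact (hcontAt u (le_trans ha hu.1)).continuousWithinAt
  have hnonneg_int : ∀ a b : ℝ, 0 ≤ a → a ≤ b → 0 ≤ ∫ t in a..b, g t := by
    intro a b ha hab
    refine intervalIntegral.integral_nonneg hab fun u hu => hnn u (le_trans ha hu.1)
  -- MVT-type bound: g t - g s ≤ K * (t - s) for 0 ≤ s ≤ t
  have hmvt : ∀ s t : ℝ, 0 ≤ s → s ≤ t → g t - g s ≤ K * (t - s) := by
    intro s t hs hst
    have hmono : MonotoneOn (fun u => K * u - g u) (Set.Ici 0) := by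
      refine monotoneOn_of_deriv_nonneg (convex_Ici 0) ?_ ?_ ?_
      · intro u hu
        exact (((hasDerivAt_id u).const_mul K).sub (hderiv u hu)).continuousAt.continuousWithinAt
      · intro u hu
        rw [interior_Ici] at hu
        exact (((hasDerivAt_id u).const_mul K).sub (hderiv u (le_of_lt hu))).differentiableAt.differentiableWithinAt
      · intro u hu
        rw [interior_Ici] at hu
        have hD : HasDerivAt (fun v => K * v - g v) (K - g' u) u := by
          have := ((hasDerivAt_id u).const_mul K).sub (hderiv u (le_of_lt hu))
          simp only [mul_one] at this
          exact this
        rw [hD.deriv]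
        linarith [hub u (le_of_lt hu)]
    have := hmono (Set.mem_Ici.mpr hs) (Set.mem_Ici.mpr (le_trans hs hst)) hst
    simp only at this
    linarith
  -- main contradiction argument
  rw [Metric.tendsto_atTop]
  intro ε hε
  by_contra hcon
  push_neg at hcon
  have hfreq : ∀ T : ℝ, ∃ t, T ≤ t ∧ 0 ≤ t ∧ ε ≤ g t := by
    intro T
    obtain ⟨t, ht1, ht2⟩ := hcon (max T 0)
    refine ⟨t, le_trans (le_max_left _ _) ht1, le_trans (le_max_right _ _) ht1, ?_⟩
    rw [Real.dist_eq, sub_zero] at ht2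
    calc ε ≤ |g t| := ht2
      _ = g t := abs_of_nonneg (hnn t (le_trans (le_max_right _ _) ht1))
  set d : ℝ := ε / (2 * K) with hd
  have hdpos : 0 < d := by positivity
  -- on [t - d, t] the function is ≥ ε/2
  have hpiece : ∀ t : ℝ, d ≤ t → ε ≤ g t → ε / 2 * d ≤ ∫ s in (t - d)..t, g s := by
    intro t hdt hgt
    have h0td : 0 ≤ t - d := by linarith
    have hlow : ∀ s ∈ Set.Icc (t - d) t, ε / 2 ≤ g s := by
      intro s hs
      have h1 : g t - g s ≤ K * (t - s) := hmvt s t (le_trans h0td hs.1) hs.2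
      have h2 : K * (t - s) ≤ K * d := by
        have : t - s ≤ d := by linarith [hs.1]
        exact mul_le_mul_of_nonneg_left this (le_of_lt hK)
      have h3 : K * d = ε / 2 := by rw [hd]; field_simp
      linarith
    have hconst : (∫ _ in (t - d)..t, ε / 2) = ε / 2 * d := by
      rw [intervalIntegral.integral_const, smul_eq_mul]
      ring_nf
    calc ε / 2 * d = ∫ _ in (t - d)..t, ε / 2 := hconst.symm
      _ ≤ ∫ s in (t - d)..t, g s := by
          refine intervalIntegral.integral_mono_on (by linarith) intervalIntegrable_const
            (hii _ _ h0td (by linarith)) hlow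
  -- recursive sequence of well-separated points
  choose tf htf1 htf2 htf3 using hfreq
  set φ : ℕ → ℝ := fun m => Nat.rec (tf d) (fun _ prev => tf (prev + d)) m with hφ
  have hφ0 : d ≤ φ 0 := htf1 d
  have hφsucc : ∀ m, φ m + d ≤ φ (m + 1) := fun m => htf1 (φ m + d)
  have hφnn : ∀ m, 0 ≤ φ m := by
    intro m
    cases m with
    | zero => exact htf2 d
    | succ p => exact htf2 (φ p + d)
  have hφg : ∀ m, ε ≤ g (φ m) := by
    intro m
    cases m with
    | zero => exact htf3 d
    | succ p => exact htf3 (φ p + d)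
  have hφd : ∀ m, d ≤ φ m := by
    intro m
    cases m with
    | zero => exact hφ0
    | succ p => linarith [hφsucc p, hφnn p]
  have key : ∀ m : ℕ, (m + 1 : ℝ) * (ε / 2 * d) ≤ ∫ s in (0:ℝ)..(φ m), g s := by
    intro m
    induction m with
    | zero =>
      have hsplit : (∫ s in (0:ℝ)..(φ 0), g s)
          = (∫ s in (0:ℝ)..(φ 0 - d), g s) + ∫ s in (φ 0 - d)..(φ 0), g s := by
        rw [intervalIntegral.integral_add_adjacent_intervals
          (hii _ _ (le_refl 0) (by linarith [hφ0])) (hii _ _ (by linarith [hφ0]) (by linarith [hdpos]))]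
      rw [hsplit]
      have h1 := hnonneg_int 0 (φ 0 - d) (le_refl 0) (by linarith [hφ0])
      have h2 := hpiece (φ 0) hφ0 (hφg 0)
      push_cast
      linarith
    | succ p ih =>
      have hp1 : 0 ≤ φ p := hφnn p
      have hp2 : φ p ≤ φ (p+1) - d := by linarith [hφsucc p]
      have hp3 : φ (p+1) - d ≤ φ (p+1) := by linarith [hdpos]
      have hsplit : (∫ s in (0:ℝ)..(φ (p+1)), g s)
          = (∫ s in (0:ℝ)..(φ p), g s) + ((∫ s in (φ p)..(φ (p+1) - d), g s)
            + ∫ s in (φ (p+1) - d)..(φ (p+1)), g s) := by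
        rw [intervalIntegral.integral_add_adjacent_intervals
            (hii _ _ (by linarith) hp2) (hii _ _ (by linarith) hp3),
          intervalIntegral.integral_add_adjacent_intervals
            (hii _ _ (le_refl 0) hp1) (hii _ _ hp1 (by linarith))]
      rw [hsplit]
      have h1 := hnonneg_int (φ p) (φ (p+1) - d) hp1 hp2
      have h2 := hpiece (φ (p+1)) (hφd (p+1)) (hφg (p+1))
      push_cast
      push_cast at ih
      linarith
  obtain ⟨m, hm⟩ := exists_nat_gt (I / (ε / 2 * d))
  have hεd : 0 < ε / 2 * d := by positivity
  have h1 : I < (m + 1 : ℝ) * (ε / 2 * d) := by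
    rw [div_lt_iff₀ hεd] at hm
    nlinarith
  have h2 := le_trans (key m) (hint (φ m) (hφnn m)) |>.trans_lt h1
  have := key m
  linarith [hint (φ m) (hφnn m)]

lemma sym_quad {N : ℕ} (M : Matrix (Fin N) (Fin N) ℝ) (u : Fin N → ℝ) :
    ∑ i, ∑ j, ((M i j + M j i)/2) * u i * u j = ∑ i, ∑ j, M i j * u i * u j := by
  have h1 : ∑ i, ∑ j, M j i * u i * u j = ∑ i, ∑ j, M i j * u i * u j := by
    rw [Finset.sum_comm]
    refine Finset.sum_congr rfl fun i _ => Finset.sum_congr rfl fun j _ => by ring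
  have h2 : ∑ i, ∑ j, ((M i j + M j i)/2) * u i * u j
      = (1/2) * ((∑ i, ∑ j, M i j * u i * u j) + ∑ i, ∑ j, M j i * u i * u j) := by
    rw [← Finset.sum_add_distrib, Finset.mul_sum]
    refine Finset.sum_congr rfl fun i _ => ?_
    rw [← Finset.sum_add_distrib, Finset.mul_sum]
    refine Finset.sum_congr rfl fun j _ => by ring
  rw [h2, h1]
  ring

lemma shift_quad {N : ℕ} (C : Matrix (Fin N) (Fin N) ℝ)
    (hrow : ∀ i, ∑ j, C i j = 0) (hcol : ∀ j, ∑ i, C i j = 0)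
    (p : Fin N → ℝ) (m : ℝ) :
    ∑ i, ∑ j, C i j * (p i + m) * (p j + m) = ∑ i, ∑ j, C i j * p i * p j := by
  have hexp : ∀ i j, C i j * (p i + m) * (p j + m)
      = C i j * p i * p j + (C i j * (p i * m)) + (C i j * (m * p j) + C i j * (m * m)) := by
    intros; ring
  simp_rw [hexp, Finset.sum_add_distrib]
  have e1 : ∑ i, ∑ j, C i j * (p i * m) = 0 := by
    refine Finset.sum_eq_zero fun i _ => ?_
    rw [← Finset.sum_mul, hrow i, zero_mul]
  have e2 : ∑ i, ∑ j, C i j * (m * p j) = 0 := by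
    rw [Finset.sum_comm]
    refine Finset.sum_eq_zero fun j _ => ?_
    rw [← Finset.sum_mul, hcol j, zero_mul]
  have e3 : ∑ i, ∑ j, C i j * (m * m) = 0 := by
    refine Finset.sum_eq_zero fun i _ => ?_
    rw [← Finset.sum_mul, hrow i, zero_mul]
  rw [e1, e2, e3]
  ring

lemma quad_abs_le {N : ℕ} (C : Matrix (Fin N) (Fin N) ℝ) (u : Fin N → ℝ) :
    |∑ i, ∑ j, C i j * u i * u j| ≤ (∑ i, ∑ j, |C i j|) * ∑ i, u i ^ 2 := by
  calc |∑ i, ∑ j, C i j * u i * u j| ≤ ∑ i, |∑ j, C i j * u i * u j| :=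
        Finset.abs_sum_le_sum_abs _ _
    _ ≤ ∑ i, ∑ j, |C i j * u i * u j| :=
        Finset.sum_le_sum fun i _ => Finset.abs_sum_le_sum_abs _ _
    _ ≤ ∑ i, ∑ j, |C i j| * ∑ l, u l ^ 2 := by
        refine Finset.sum_le_sum fun i _ => Finset.sum_le_sum fun j _ => ?_
        rw [abs_mul, abs_mul]
        have hi : u i ^ 2 ≤ ∑ l, u l ^ 2 :=
          Finset.single_le_sum (f := fun l => u l ^ 2) (fun l _ => sq_nonneg _) (Finset.mem_univ i)
        have hj : u j ^ 2 ≤ ∑ l, u l ^ 2 :=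
          Finset.single_le_sum (f := fun l => u l ^ 2) (fun l _ => sq_nonneg _) (Finset.mem_univ j)
        have habs : |u i| * |u j| ≤ ∑ l, u l ^ 2 := by
          nlinarith [sq_abs (u i), sq_abs (u j), sq_nonneg (|u i| - |u j|), abs_nonneg (u i), abs_nonneg (u j)]
        have := abs_nonneg (C i j)
        nlinarith
    _ = (∑ i, ∑ j, |C i j|) * ∑ i, u i ^ 2 := by
        rw [Finset.sum_mul]
        exact Finset.sum_congr rfl fun i _ => by rw [Finset.sum_mul]




open Matrix Filter

/-- Theorem 2: linearly coupled systems with an unknown irreducible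
coupling matrix A satisfying Condition A1 and adaptive scheme driven by any irreducible
matrix Ã satisfying Condition A2:
ẋᵢ = f(xᵢ,t) + c(t) Σ_{j≠i} a_{ij} Γ(xⱼ − xᵢ), ċ = −(α/2) Σᵢⱼ ãᵢⱼ xᵢᵀxⱼ, c(0) = 0,
where Γ = diag(γ) > 0 and f ∈ QUAD(Δ,ϖ). Then ‖xᵢ(t) − xⱼ(t)‖ → 0 for all i,j,
and c(t) converges to a finite limit. -/
theorem stmt13 (N n : ℕ) (hN : 2 ≤ N) (A : Matrix (Fin N) (Fin N) ℝ)
    (hoff : ∀ i j, i ≠ j → 0 ≤ A i j)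
    (hdiag : ∀ i, A i i = -∑ j ∈ Finset.univ.erase i, A i j)
    (hirr : ∀ S : Finset (Fin N), S.Nonempty → S ≠ Finset.univ →
      ∃ i ∈ S, ∃ j, j ∉ S ∧ A i j ≠ 0)
    (At : Matrix (Fin N) (Fin N) ℝ)
    (hAtsym : ∀ i j, At i j = At j i)
    (hAtoff : ∀ i j, i ≠ j → 0 ≤ At i j)
    (hAtdiag : ∀ i, At i i = -∑ j ∈ Finset.univ.erase i, At i j)
    (hAtirr : ∀ S : Finset (Fin N), S.Nonempty → S ≠ Finset.univ →
      ∃ i ∈ S, ∃ j, j ∉ S ∧ At i j ≠ 0)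
    (γ : Fin n → ℝ) (hγ : ∀ k, 0 < γ k)
    (δ : Fin n → ℝ) (ϖ : ℝ) (hϖ : 0 < ϖ)
    (f : (Fin n → ℝ) → ℝ → (Fin n → ℝ))
    (hf : Continuous fun p : (Fin n → ℝ) × ℝ => f p.1 p.2)
    (hQUAD : ∀ x y : Fin n → ℝ, ∀ t : ℝ, 0 ≤ t →
      (∑ k, (x k - y k) * (f x t k - f y t k)) - (∑ k, δ k * (x k - y k) ^ 2)
        ≤ -ϖ * ∑ k, (x k - y k) ^ 2)
    (α : ℝ) (hα : 0 < α)
    (x : Fin N → ℝ → (Fin n → ℝ)) (c : ℝ → ℝ) (hc0 : c 0 = 0)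
    (hODE : ∀ i, ∀ t : ℝ, 0 ≤ t →
      HasDerivAt (x i)
        (fun k => f (x i t) t k
          + c t * ∑ j ∈ Finset.univ.erase i, A i j * (γ k * (x j t k - x i t k))) t)
    (hcODE : ∀ t : ℝ, 0 ≤ t →
      HasDerivAt c (-(α / 2) * ∑ i, ∑ j, At i j * ∑ k, x i t k * x j t k) t) :
    (∀ i j, Tendsto (fun t => ‖x i t - x j t‖) atTop (nhds 0)) ∧
    ∃ c₀ : ℝ, Tendsto c atTop (nhds c₀) := by
  classical
  haveI : NeZero N := ⟨by omega⟩
  have hrowA : ∀ i, ∑ j, A i j = 0 := by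
    intro i
    rw [← Finset.add_sum_erase _ _ (Finset.mem_univ i), hdiag i]
    ring
  have hrowAt : ∀ i, ∑ j, At i j = 0 := by
    intro i
    rw [← Finset.add_sum_erase _ _ (Finset.mem_univ i), hAtdiag i]
    ring
  have hcolAt : ∀ j, ∑ i, At i j = 0 := by
    intro j
    rw [Finset.sum_congr rfl fun i _ => hAtsym i j]
    exact hrowAt j
  -- derivative of c, rewritten per-coordinate
  set cdot : ℝ → ℝ := fun t => -(α / 2) * ∑ i, ∑ j, At i j * ∑ k, x i t k * x j t k
    with hcdotdef
  have hcd : ∀ t, 0 ≤ t → HasDerivAt c (cdot t) t := hcODE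
  have hQsw : ∀ t : ℝ, (∑ i, ∑ j, At i j * ∑ k, x i t k * x j t k)
      = ∑ k, ∑ i, ∑ j, At i j * x i t k * x j t k := by
    intro t
    simp_rw [Finset.mul_sum]
    rw [Finset.sum_congr rfl fun i (_ : i ∈ Finset.univ) =>
      (Finset.sum_comm : (∑ j, ∑ k, At i j * (x i t k * x j t k))
        = ∑ k, ∑ j, At i j * (x i t k * x j t k)), Finset.sum_comm]
    refine Finset.sum_congr rfl fun k _ => Finset.sum_congr rfl fun i _ =>
      Finset.sum_congr rfl fun j _ => by ring
  have hcdnn : ∀ t, 0 ≤ t → 0 ≤ cdot t := by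
    intro t ht
    have hQ : (∑ i, ∑ j, At i j * ∑ k, x i t k * x j t k) ≤ 0 := by
      rw [hQsw t]
      refine Finset.sum_nonpos fun k _ => ?_
      exact quad_form_nonpos At hAtsym hAtoff hrowAt (fun i => x i t k)
    simp only [hcdotdef]
    nlinarith
  have hcmono : MonotoneOn c (Set.Ici 0) := by
    refine monotoneOn_of_deriv_nonneg (convex_Ici 0) ?_ ?_ ?_
    · intro u hu
      exact (hcd u hu).continuousAt.continuousWithinAt
    · intro u hu
      rw [interior_Ici] at hu
      exact (hcd u (le_of_lt hu)).differentiableAt.differentiableWithinAt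
    · intro u hu
      rw [interior_Ici] at hu
      rw [(hcd u (le_of_lt hu)).deriv]
      exact hcdnn u (le_of_lt hu)
  have hcnn : ∀ t, 0 ≤ t → 0 ≤ c t := by
    intro t ht
    have := hcmono (Set.mem_Ici.mpr (le_refl 0)) (Set.mem_Ici.mpr ht) ht
    rw [hc0] at this
    exact this
  rcases Nat.eq_zero_or_pos n with hn | hn
  · -- degenerate case n = 0
    subst hn
    constructor
    · intro i j
      have hz : ∀ t : ℝ, x i t - x j t = 0 := fun t => funext fun k => k.elim0
      have heq : (fun t => ‖x i t - x j t‖) = fun _ => (0:ℝ) :=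
        funext fun t => by rw [hz t, norm_zero]
      rw [heq]
      exact tendsto_const_nhds
    · refine ⟨0, ?_⟩
      have hcd0 : ∀ t : ℝ, 0 ≤ t → cdot t = 0 := by
        intro t ht
        simp [hcdotdef]
      have hanti : AntitoneOn c (Set.Ici 0) := by
        refine antitoneOn_of_deriv_nonpos (convex_Ici 0) ?_ ?_ ?_
        · intro u hu
          exact (hcd u hu).continuousAt.continuousWithinAt
        · intro u hu
          rw [interior_Ici] at hu
          exact (hcd u (le_of_lt hu)).differentiableAt.differentiableWithinAt
        · intro u hu
          rw [interior_Ici] at hu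
          rw [(hcd u (le_of_lt hu)).deriv, hcd0 u (le_of_lt hu)]
      have hev : ∀ᶠ t in atTop, c t = 0 := by
        filter_upwards [eventually_ge_atTop (0:ℝ)] with t ht
        have h1 := hcmono (Set.mem_Ici.mpr (le_refl 0)) (Set.mem_Ici.mpr ht) ht
        have h2 := hanti (Set.mem_Ici.mpr (le_refl 0)) (Set.mem_Ici.mpr ht) ht
        rw [hc0] at h1 h2
        linarith
      exact Tendsto.congr' (hev.mono fun t ht => ht.symm) tendsto_const_nhds
  -- main case n ≥ 1
  haveI : Nonempty (Fin N) := ⟨⟨0, by omega⟩⟩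
  obtain ⟨ξ, hξ, hξA⟩ := exists_pos_left_eigen A hoff hrowA hirr
  obtain ⟨imax, _, hmax'⟩ := Finset.exists_max_image Finset.univ ξ Finset.univ_nonempty
  obtain ⟨imin, _, hmin'⟩ := Finset.exists_min_image Finset.univ ξ Finset.univ_nonempty
  set ξmax := ξ imax with hξmaxdef
  set ξmin := ξ imin with hξmindef
  have hξmax : ∀ i, ξ i ≤ ξmax := fun i => hmax' i (Finset.mem_univ i)
  have hξmin : ∀ i, ξmin ≤ ξ i := fun i => hmin' i (Finset.mem_univ i)
  have hξminpos : 0 < ξmin := hξ imin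
  have hξmaxpos : 0 < ξmax := hξ imax
  set σ : ℝ := ∑ i, ξ i with hσdef
  have hσpos : 0 < σ := Finset.sum_pos (fun i _ => hξ i) Finset.univ_nonempty
  obtain ⟨kγ, _, hγmin'⟩ := Finset.exists_min_image Finset.univ γ
    ⟨⟨0, hn⟩, Finset.mem_univ _⟩
  set γmin := γ kγ with hγmindef
  have hγmin : ∀ k, γmin ≤ γ k := fun k => hγmin' k (Finset.mem_univ k)
  have hγminpos : 0 < γmin := hγ kγ
  set D : ℝ := ∑ k, |δ k| with hDdef
  have hDnn : 0 ≤ D := Finset.sum_nonneg fun k _ => abs_nonneg _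
  have hδD : ∀ k, δ k ≤ D := fun k => le_trans (le_abs_self _)
    (Finset.single_le_sum (f := fun k => |δ k|) (fun k _ => abs_nonneg _) (Finset.mem_univ k))
  set Lt : ℝ := ∑ i, ∑ j, |At i j| with hLtdef
  have hLtnn : 0 ≤ Lt :=
    Finset.sum_nonneg fun i _ => Finset.sum_nonneg fun j _ => abs_nonneg _
  -- the symmetrized weighted matrix B
  set B : Matrix (Fin N) (Fin N) ℝ := fun i j => (ξ i * A i j + ξ j * A j i) / 2 with hBdef
  have hBsym : ∀ i j, B i j = B j i := by
    intro i j; simp only [hBdef]; ring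
  have hBrow : ∀ i, ∑ j, B i j = 0 := by
    intro i
    simp only [hBdef]
    rw [← Finset.sum_div]
    rw [Finset.sum_add_distrib, ← Finset.mul_sum, hrowA i, hξA i]
    norm_num
  have hBoff : ∀ i j, i ≠ j → 0 ≤ B i j := by
    intro i j hij
    simp only [hBdef]
    have h1 := mul_nonneg (le_of_lt (hξ i)) (hoff i j hij)
    have h2 := mul_nonneg (le_of_lt (hξ j)) (hoff j i (Ne.symm hij))
    linarith
  have hBirr : ∀ S : Finset (Fin N), S.Nonempty → S ≠ Finset.univ →
      ∃ i ∈ S, ∃ j, j ∉ S ∧ B i j ≠ 0 := by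
    intro S hS1 hS2
    obtain ⟨i, hiS, j, hjS, hAij⟩ := hirr S hS1 hS2
    have hij : i ≠ j := by rintro rfl; exact hjS hiS
    refine ⟨i, hiS, j, hjS, ?_⟩
    have h1 : 0 < ξ i * A i j :=
      mul_pos (hξ i) (lt_of_le_of_ne (hoff i j hij) (Ne.symm hAij))
    have h2 := mul_nonneg (le_of_lt (hξ j)) (hoff j i (Ne.symm hij))
    simp only [hBdef]
    intro hc
    nlinarith
  obtain ⟨lamB, hlamBpos, hgapB⟩ := spectral_gap hN B hBsym hBoff hBrow hBirr ξ hξ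
  obtain ⟨lamT, hlamTpos, hgapT⟩ := spectral_gap hN At hAtsym hAtoff hrowAt hAtirr ξ hξ
  set kap : ℝ := 2 * γmin * lamB / (Lt + 1) with hkapdef
  have hkappos : 0 < kap := by
    rw [hkapdef]
    have : (0:ℝ) < Lt + 1 := by linarith
    positivity
  set Lc : ℝ := (2 * ξmax * D + 1) / (kap * lamT) with hLcdef
  have hLcpos : 0 < Lc := by
    rw [hLcdef]
    positivity
  have hkapLt : kap * Lt / 2 ≤ γmin * lamB := by
    rw [hkapdef]
    rw [div_mul_eq_mul_div, div_div, div_le_iff₀ (by linarith : (0:ℝ) < (Lt+1)*2)]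
    nlinarith [mul_pos hγminpos hlamBpos]
  have hkapLc : kap * Lc * lamT / 2 = ξmax * D + 1/2 := by
    rw [hLcdef]
    field_simp
  -- the weighted average and deviation functionals
  set xbar : ℝ → Fin n → ℝ := fun t k => σ⁻¹ * ∑ i, ξ i * x i t k with hxbardef
  set U : ℝ → ℝ := fun t => ∑ i, ∑ k, (x i t k - xbar t k) ^ 2 with hUdef
  set W : ℝ → ℝ := fun t => ∑ i, ξ i * ∑ k, (x i t k - xbar t k) ^ 2 with hWdef
  set xdot : Fin N → ℝ → Fin n → ℝ := fun i t k => f (x i t) t k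
    + c t * ∑ j ∈ Finset.univ.erase i, A i j * (γ k * (x j t k - x i t k)) with hxdotdef
  set xbardot : ℝ → Fin n → ℝ := fun t k => σ⁻¹ * ∑ i, ξ i * xdot i t k with hxbardotdef
  set wdot : ℝ → ℝ := fun t =>
    ∑ i, ξ i * ∑ k, (2 * (x i t k - xbar t k) * (xdot i t k - xbardot t k)) with hwdotdef
  set V : ℝ → ℝ := fun t => (1/2) * W t + kap/(2*α) * (c t - Lc)^2 with hVdef
  set vdot : ℝ → ℝ := fun t =>
    (1/2) * wdot t + kap/(2*α) * (2*(c t - Lc) * cdot t) with hvdotdef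
  -- derivatives
  have hdx : ∀ (i : Fin N) (k : Fin n) (t : ℝ), 0 ≤ t →
      HasDerivAt (fun s => x i s k) (xdot i t k) t := by
    intro i k t ht
    have h := hasDerivAt_pi.mp (hODE i t ht) k
    simp only [hxdotdef]
    exact h
  have hdxbar : ∀ (k : Fin n) (t : ℝ), 0 ≤ t →
      HasDerivAt (fun s => xbar s k) (xbardot t k) t := by
    intro k t ht
    simp only [hxbardef, hxbardotdef]
    exact (HasDerivAt.fun_sum fun i _ => (hdx i k t ht).const_mul (ξ i)).const_mul σ⁻¹
  have hsq : ∀ (i : Fin N) (k : Fin n) (t : ℝ), 0 ≤ t →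
      HasDerivAt (fun s => (x i s k - xbar s k) ^ 2)
        (2 * (x i t k - xbar t k) * (xdot i t k - xbardot t k)) t := by
    intro i k t ht
    have h2 := ((hdx i k t ht).sub (hdxbar k t ht)).fun_pow 2
    refine h2.congr_deriv ?_
    simp [pow_one]
  have hdW : ∀ t : ℝ, 0 ≤ t → HasDerivAt W (wdot t) t := by
    intro t ht
    simp only [hWdef, hwdotdef]
    exact HasDerivAt.fun_sum fun i _ =>
      (HasDerivAt.fun_sum fun k _ => hsq i k t ht).const_mul (ξ i)
  have hdV : ∀ t : ℝ, 0 ≤ t → HasDerivAt V (vdot t) t := by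
    intro t ht
    simp only [hVdef, hvdotdef]
    have h1 := (hdW t ht).const_mul (1/2 : ℝ)
    have h2 : HasDerivAt (fun s => (c s - Lc)^2) (2*(c t - Lc) * cdot t) t := by
      have := ((hcd t ht).sub_const Lc).fun_pow 2
      refine this.congr_deriv ?_
      simp [pow_one]
    exact h1.add (h2.const_mul (kap/(2*α)))
  -- the weighted deviations sum to zero
  have hsum0 : ∀ (t : ℝ) (k : Fin n), ∑ i, ξ i * (x i t k - xbar t k) = 0 := by
    intro t k
    have h1 : ∑ i, ξ i * (x i t k - xbar t k)
        = (∑ i, ξ i * x i t k) - σ * xbar t k := by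
      simp_rw [mul_sub]
      rw [Finset.sum_sub_distrib, ← Finset.sum_mul]
    rw [h1]
    simp only [hxbardef]
    field_simp
    ring
  have hzero : ∀ (t : ℝ) (b : Fin n → ℝ),
      ∑ i, ξ i * ∑ k, (x i t k - xbar t k) * b k = 0 := by
    intro t b
    have h1 : ∀ i : Fin N, ξ i * ∑ k, (x i t k - xbar t k) * b k
        = ∑ k, b k * (ξ i * (x i t k - xbar t k)) := by
      intro i
      rw [Finset.mul_sum]
      exact Finset.sum_congr rfl fun k _ => by ring
    rw [Finset.sum_congr rfl fun i _ => h1 i, Finset.sum_comm]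
    refine Finset.sum_eq_zero fun k _ => ?_
    rw [← Finset.mul_sum, hsum0 t k, mul_zero]
  -- named quantities
  set Sfd : ℝ → ℝ := fun t => ∑ i, ξ i * ∑ k,
    (x i t k - xbar t k) * (f (x i t) t k - f (xbar t) t k) with hSfddef
  set Fq : ℝ → ℝ := fun t => ∑ k, γ k * ∑ i, ∑ j,
    B i j * (x i t k - xbar t k) * (x j t k - xbar t k) with hFqdef
  set Qq : ℝ → ℝ := fun t => ∑ k, ∑ i, ∑ j,
    At i j * (x i t k - xbar t k) * (x j t k - xbar t k) with hQqdef
  -- split of the derivative of W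
  have hwsplit : ∀ t : ℝ, 0 ≤ t → wdot t = 2 * (Sfd t + c t * Fq t) := by
    intro t ht
    have e1 : wdot t = 2 * (∑ i, ξ i * ∑ k, (x i t k - xbar t k) * xdot i t k)
        - 2 * (∑ i, ξ i * ∑ k, (x i t k - xbar t k) * xbardot t k) := by
      simp only [hwdotdef]
      have hper : ∀ i : Fin N, ξ i * ∑ k, (2 * (x i t k - xbar t k) * (xdot i t k - xbardot t k))
          = 2 * (ξ i * ∑ k, (x i t k - xbar t k) * xdot i t k)
            - 2 * (ξ i * ∑ k, (x i t k - xbar t k) * xbardot t k) := by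
        intro i
        have inner : ∑ k, (2 * (x i t k - xbar t k) * (xdot i t k - xbardot t k))
            = 2 * ((∑ k, (x i t k - xbar t k) * xdot i t k)
              - ∑ k, (x i t k - xbar t k) * xbardot t k) := by
          rw [← Finset.sum_sub_distrib, Finset.mul_sum]
          exact Finset.sum_congr rfl fun k _ => by ring
        rw [inner]
        ring
      rw [Finset.sum_congr rfl fun i _ => hper i, Finset.sum_sub_distrib,
        ← Finset.mul_sum, ← Finset.mul_sum]
    rw [e1, hzero t (xbardot t), mul_zero, sub_zero]
    -- now split xdot into the f-part and the coupling part
    have e2 : (∑ i, ξ i * ∑ k, (x i t k - xbar t k) * xdot i t k)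
        = (∑ i, ξ i * ∑ k, (x i t k - xbar t k) * f (x i t) t k)
          + c t * (∑ i, ξ i * ∑ k, (x i t k - xbar t k) *
            ∑ j ∈ Finset.univ.erase i, A i j * (γ k * (x j t k - x i t k))) := by
      simp only [hxdotdef]
      have hper : ∀ i : Fin N, ξ i * ∑ k, (x i t k - xbar t k) * (f (x i t) t k
            + c t * ∑ j ∈ Finset.univ.erase i, A i j * (γ k * (x j t k - x i t k)))
          = ξ i * ∑ k, (x i t k - xbar t k) * f (x i t) t k
            + c t * (ξ i * ∑ k, (x i t k - xbar t k) *
              ∑ j ∈ Finset.univ.erase i, A i j * (γ k * (x j t k - x i t k))) := by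
        intro i
        have inner : ∑ k, (x i t k - xbar t k) * (f (x i t) t k
              + c t * ∑ j ∈ Finset.univ.erase i, A i j * (γ k * (x j t k - x i t k)))
            = (∑ k, (x i t k - xbar t k) * f (x i t) t k)
              + c t * ∑ k, (x i t k - xbar t k) *
                ∑ j ∈ Finset.univ.erase i, A i j * (γ k * (x j t k - x i t k)) := by
          rw [Finset.mul_sum, ← Finset.sum_add_distrib]
          exact Finset.sum_congr rfl fun k _ => by ring
        rw [inner]
        ring
      rw [Finset.sum_congr rfl fun i _ => hper i, Finset.sum_add_distrib, ← Finset.mul_sum]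
    rw [e2]
    -- f-part: subtract and add the mean value
    have e3 : (∑ i, ξ i * ∑ k, (x i t k - xbar t k) * f (x i t) t k)
        = Sfd t + ∑ i, ξ i * ∑ k, (x i t k - xbar t k) * f (xbar t) t k := by
      simp only [hSfddef]
      rw [← Finset.sum_add_distrib]
      refine Finset.sum_congr rfl fun i _ => ?_
      rw [← mul_add, ← Finset.sum_add_distrib]
      refine congrArg (ξ i * ·) (Finset.sum_congr rfl fun k _ => by ring)
    rw [e3, hzero t (f (xbar t) t), add_zero]
    -- coupling part equals the symmetrized quadratic form
    have e4 : (∑ i, ξ i * ∑ k, (x i t k - xbar t k) *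
          ∑ j ∈ Finset.univ.erase i, A i j * (γ k * (x j t k - x i t k)))
        = Fq t := by
      have hj : ∀ (i : Fin N) (k : Fin n),
          (∑ j ∈ Finset.univ.erase i, A i j * (γ k * (x j t k - x i t k)))
          = γ k * ∑ j, A i j * (x j t k - xbar t k) := by
        intro i k
        have s1 : (∑ j ∈ Finset.univ.erase i, A i j * (γ k * (x j t k - x i t k)))
            = γ k * ∑ j ∈ Finset.univ.erase i, A i j *
              ((x j t k - xbar t k) - (x i t k - xbar t k)) := by
          rw [Finset.mul_sum]
          exact Finset.sum_congr rfl fun j _ => by ring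
        rw [s1]
        congr 1
        have s2 : (∑ j ∈ Finset.univ.erase i, A i j *
              ((x j t k - xbar t k) - (x i t k - xbar t k)))
            = ∑ j, A i j * ((x j t k - xbar t k) - (x i t k - xbar t k)) := by
          rw [← Finset.add_sum_erase _ _ (Finset.mem_univ i)]
          simp
        rw [s2]
        have s3 : (∑ j, A i j * ((x j t k - xbar t k) - (x i t k - xbar t k)))
            = (∑ j, A i j * (x j t k - xbar t k)) - (∑ j, A i j) * (x i t k - xbar t k) := by
          rw [Finset.sum_mul, ← Finset.sum_sub_distrib]
          exact Finset.sum_congr rfl fun j _ => by ring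
        rw [s3, hrowA i, zero_mul, sub_zero]
      have e5 : (∑ i, ξ i * ∑ k, (x i t k - xbar t k) *
            ∑ j ∈ Finset.univ.erase i, A i j * (γ k * (x j t k - x i t k)))
          = ∑ i, ∑ k, γ k * ∑ j, (ξ i * A i j) * (x i t k - xbar t k) * (x j t k - xbar t k) := by
        refine Finset.sum_congr rfl fun i _ => ?_
        rw [Finset.mul_sum]
        refine Finset.sum_congr rfl fun k _ => ?_
        rw [hj i k]
        have hr : ∑ j, (ξ i * A i j) * (x i t k - xbar t k) * (x j t k - xbar t k)
            = (ξ i * (x i t k - xbar t k)) * ∑ j, A i j * (x j t k - xbar t k) := by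
          rw [Finset.mul_sum]
          exact Finset.sum_congr rfl fun j _ => by ring
        rw [hr]
        ring
      rw [e5, Finset.sum_comm]
      simp only [hFqdef]
      refine Finset.sum_congr rfl fun k _ => ?_
      rw [← Finset.mul_sum]
      congr 1
      simp only [hBdef]
      exact (sym_quad (fun i j => ξ i * A i j) (fun i => x i t k - xbar t k)).symm
    rw [e4]
  -- the adaptive gain derivative in terms of deviations
  have hQeq : ∀ t : ℝ, cdot t = -(α/2) * Qq t := by
    intro t
    simp only [hcdotdef, hQqdef]
    congr 1
    rw [hQsw t]
    refine Finset.sum_congr rfl fun k _ => ?_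
    have := shift_quad At hrowAt hcolAt (fun i => x i t k - xbar t k) (xbar t k)
    rw [← this]
    refine Finset.sum_congr rfl fun i _ => Finset.sum_congr rfl fun j _ => by ring
  -- elementary positivity/comparison facts
  have hUnn : ∀ t : ℝ, 0 ≤ U t := fun t =>
    Finset.sum_nonneg fun i _ => Finset.sum_nonneg fun k _ => sq_nonneg _
  have hUswap : ∀ t : ℝ, U t = ∑ k, ∑ i, (x i t k - xbar t k)^2 := fun t => Finset.sum_comm
  have hWleU : ∀ t : ℝ, W t ≤ ξmax * U t := by
    intro t
    simp only [hWdef, hUdef]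
    rw [Finset.mul_sum]
    refine Finset.sum_le_sum fun i _ => ?_
    exact mul_le_mul_of_nonneg_right (hξmax i)
      (Finset.sum_nonneg fun k _ => sq_nonneg _)
  have hWgeU : ∀ t : ℝ, ξmin * U t ≤ W t := by
    intro t
    simp only [hWdef, hUdef]
    rw [Finset.mul_sum]
    refine Finset.sum_le_sum fun i _ => ?_
    exact mul_le_mul_of_nonneg_right (hξmin i)
      (Finset.sum_nonneg fun k _ => sq_nonneg _)
  have hWnn : ∀ t : ℝ, 0 ≤ W t := fun t =>
    le_trans (by nlinarith [hUnn t, hξminpos.le, mul_nonneg hξminpos.le (hUnn t)]) (hWgeU t)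
  -- QUAD bound on the f-part
  have hSfdle : ∀ t : ℝ, 0 ≤ t → Sfd t ≤ D * W t - ϖ * W t := by
    intro t ht
    have hper : ∀ i : Fin N, (∑ k, (x i t k - xbar t k) * (f (x i t) t k - f (xbar t) t k))
        ≤ (D - ϖ) * ∑ k, (x i t k - xbar t k)^2 := by
      intro i
      have h1 := hQUAD (x i t) (xbar t) t ht
      have h2 : (∑ k, δ k * (x i t k - xbar t k) ^ 2) ≤ D * ∑ k, (x i t k - xbar t k)^2 := by
        rw [Finset.mul_sum]
        exact Finset.sum_le_sum fun k _ => mul_le_mul_of_nonneg_right (hδD k) (sq_nonneg _)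
      nlinarith
    have h3 : Sfd t ≤ ∑ i, ξ i * ((D - ϖ) * ∑ k, (x i t k - xbar t k)^2) := by
      simp only [hSfddef]
      exact Finset.sum_le_sum fun i _ => mul_le_mul_of_nonneg_left (hper i) (hξ i).le
    have h4 : (∑ i, ξ i * ((D - ϖ) * ∑ k, (x i t k - xbar t k)^2)) = D * W t - ϖ * W t := by
      simp only [hWdef]
      rw [Finset.mul_sum, Finset.mul_sum, ← Finset.sum_sub_distrib]
      exact Finset.sum_congr rfl fun i _ => by ring
    linarith
  -- gap bound on the coupling part
  have hFqle : ∀ t : ℝ, Fq t ≤ -(γmin * lamB) * U t := by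
    intro t
    have hper : ∀ k : Fin n, γ k * (∑ i, ∑ j, B i j * (x i t k - xbar t k) * (x j t k - xbar t k))
        ≤ -(γmin * lamB) * ∑ i, (x i t k - xbar t k)^2 := by
      intro k
      have h1 := hgapB (fun i => x i t k - xbar t k) (hsum0 t k)
      have hs : 0 ≤ ∑ i, (x i t k - xbar t k)^2 := Finset.sum_nonneg fun i _ => sq_nonneg _
      have h2 : γ k * (∑ i, ∑ j, B i j * (x i t k - xbar t k) * (x j t k - xbar t k))
          ≤ γ k * (-lamB * ∑ i, (x i t k - xbar t k)^2) :=
        mul_le_mul_of_nonneg_left h1 (hγ k).le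
      have h3 : γ k * (-lamB * ∑ i, (x i t k - xbar t k)^2)
          ≤ γmin * (-lamB * ∑ i, (x i t k - xbar t k)^2) := by
        refine mul_le_mul_of_nonpos_right (hγmin k) ?_
        nlinarith
      nlinarith
    calc Fq t ≤ ∑ k, (-(γmin * lamB) * ∑ i, (x i t k - xbar t k)^2) := by
          simp only [hFqdef]
          exact Finset.sum_le_sum fun k _ => hper k
      _ = -(γmin * lamB) * U t := by
          rw [hUswap t, Finset.mul_sum]
  -- gap and norm bounds on the adaptive quadratic form
  have hQqle : ∀ t : ℝ, Qq t ≤ -lamT * U t := by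
    intro t
    calc Qq t ≤ ∑ k, (-lamT * ∑ i, (x i t k - xbar t k)^2) := by
          simp only [hQqdef]
          exact Finset.sum_le_sum fun k _ => hgapT (fun i => x i t k - xbar t k) (hsum0 t k)
      _ = -lamT * U t := by rw [hUswap t, Finset.mul_sum]
  have hQqabs : ∀ t : ℝ, -Qq t ≤ Lt * U t := by
    intro t
    have hper : ∀ k : Fin n, -(∑ i, ∑ j, At i j * (x i t k - xbar t k) * (x j t k - xbar t k))
        ≤ Lt * ∑ i, (x i t k - xbar t k)^2 := by
      intro k
      have h1 := quad_abs_le At (fun i => x i t k - xbar t k)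
      rw [← hLtdef] at h1
      calc -(∑ i, ∑ j, At i j * (x i t k - xbar t k) * (x j t k - xbar t k))
          ≤ |∑ i, ∑ j, At i j * (x i t k - xbar t k) * (x j t k - xbar t k)| := neg_le_abs _
        _ ≤ Lt * ∑ i, (x i t k - xbar t k)^2 := h1
    calc -Qq t = ∑ k, -(∑ i, ∑ j, At i j * (x i t k - xbar t k) * (x j t k - xbar t k)) := by
          simp only [hQqdef]
          rw [← Finset.sum_neg_distrib]
      _ ≤ ∑ k, Lt * ∑ i, (x i t k - xbar t k)^2 := Finset.sum_le_sum fun k _ => hper k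
      _ = Lt * U t := by rw [hUswap t, Finset.mul_sum]
  -- the key Lyapunov differential inequality
  have hvle : ∀ t : ℝ, 0 ≤ t → vdot t ≤ -(ϖ * ξmin) * U t := by
    intro t ht
    have hveq : vdot t = Sfd t + c t * Fq t - kap/2 * (c t - Lc) * Qq t := by
      simp only [hvdotdef]
      rw [hwsplit t ht, hQeq t]
      field_simp
      ring
    have b1 : Sfd t ≤ D * (ξmax * U t) - ϖ * (ξmin * U t) := by
      have h1 := hSfdle t ht
      have h2 : D * W t ≤ D * (ξmax * U t) := mul_le_mul_of_nonneg_left (hWleU t) hDnn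
      have h3 : ϖ * (ξmin * U t) ≤ ϖ * W t := mul_le_mul_of_nonneg_left (hWgeU t) hϖ.le
      linarith
    have b2 : c t * Fq t ≤ c t * (-(γmin * lamB) * U t) :=
      mul_le_mul_of_nonneg_left (hFqle t) (hcnn t ht)
    have b3 : -(kap/2) * c t * Qq t ≤ kap/2 * c t * (Lt * U t) := by
      have h1 : (0:ℝ) ≤ kap/2 * c t := mul_nonneg (by positivity) (hcnn t ht)
      have h2 := mul_le_mul_of_nonneg_left (hQqabs t) h1
      linarith
    have b4 : kap/2 * Lc * Qq t ≤ kap/2 * Lc * (-lamT * U t) :=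
      mul_le_mul_of_nonneg_left (hQqle t) (by positivity)
    have e1 : kap/2 * c t * (Lt * U t) ≤ c t * (γmin * lamB) * U t := by
      have h := mul_le_mul_of_nonneg_left hkapLt (mul_nonneg (hcnn t ht) (hUnn t))
      linarith
    have e2 : kap/2 * Lc * (-lamT * U t) = -(ξmax * D + 1/2) * U t := by
      linear_combination (-(U t)) * hkapLc
    have hU := hUnn t
    clear_value vdot Sfd Fq Qq U W wdot cdot kap Lc Lt D γmin ξmax ξmin
    linarith [hveq, b1, b2, b3, b4, e1, e2]
  -- V is nonincreasing on [0,∞)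
  have hVanti : AntitoneOn V (Set.Ici 0) := by
    refine antitoneOn_of_deriv_nonpos (convex_Ici 0) ?_ ?_ ?_
    · intro u hu
      exact (hdV u hu).continuousAt.continuousWithinAt
    · intro u hu
      rw [interior_Ici] at hu
      exact (hdV u hu.le).differentiableAt.differentiableWithinAt
    · intro u hu
      rw [interior_Ici] at hu
      rw [(hdV u hu.le).deriv]
      have h1 := hvle u hu.le
      have h2 : 0 ≤ (ϖ * ξmin) * U u :=
        mul_nonneg (mul_nonneg hϖ.le hξminpos.le) (hUnn u)
      linarith
  have hVle0 : ∀ t, 0 ≤ t → V t ≤ V 0 := fun t ht =>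
    hVanti (Set.mem_Ici.mpr le_rfl) (Set.mem_Ici.mpr ht) ht
  have hVnn : ∀ t : ℝ, 0 ≤ V t := by
    intro t
    simp only [hVdef]
    have h1 := hWnn t
    have h2 : (0:ℝ) ≤ kap/(2*α) * (c t - Lc)^2 := by positivity
    linarith
  have hV0nn : 0 ≤ V 0 := hVnn 0
  have hWle2V : ∀ t : ℝ, W t ≤ 2 * V t := by
    intro t
    simp only [hVdef]
    have h2 : (0:ℝ) ≤ kap/(2*α) * (c t - Lc)^2 := by positivity
    linarith
  have hUb : ∀ t, 0 ≤ t → U t ≤ 2 * V 0 / ξmin := by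
    intro t ht
    rw [le_div_iff₀ hξminpos]
    have h1 := hWgeU t
    have h2 := hWle2V t
    have h3 := hVle0 t ht
    clear_value U W V ξmin
    nlinarith
  -- c is bounded above, hence converges
  have hcb : ∀ t, 0 ≤ t → c t ≤ Lc + Real.sqrt (2*α*(V 0)/kap) := by
    intro t ht
    have h1 : kap/(2*α) * (c t - Lc)^2 ≤ V 0 := by
      have hV : kap/(2*α) * (c t - Lc)^2 ≤ V t := by
        simp only [hVdef]
        have h2 := hWnn t
        linarith
      exact le_trans hV (hVle0 t ht)
    have h2 : (c t - Lc)^2 ≤ 2*α*(V 0)/kap := by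
      have e : (c t - Lc)^2 = (2*α/kap) * (kap/(2*α) * (c t - Lc)^2) := by
        field_simp
      calc (c t - Lc)^2 = (2*α/kap) * (kap/(2*α) * (c t - Lc)^2) := e
        _ ≤ (2*α/kap) * V 0 := mul_le_mul_of_nonneg_left h1 (by positivity)
        _ = 2*α*(V 0)/kap := by ring
    have h3 : c t - Lc ≤ Real.sqrt (2*α*(V 0)/kap) := by
      calc c t - Lc ≤ |c t - Lc| := le_abs_self _
        _ = Real.sqrt ((c t - Lc)^2) := (Real.sqrt_sq_eq_abs _).symm
        _ ≤ Real.sqrt (2*α*(V 0)/kap) := Real.sqrt_le_sqrt h2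
    linarith
  obtain ⟨c₀, hc₀⟩ := tendsto_of_monotoneOn_bdd c (Lc + Real.sqrt (2*α*(V 0)/kap)) hcmono hcb
  -- continuity of U and W on [0,∞)
  have hUcontAt : ∀ s : ℝ, 0 ≤ s → ContinuousAt U s := by
    intro s hs
    simp only [hUdef]
    exact tendsto_finset_sum _ fun i _ => tendsto_finset_sum _ fun k _ =>
      (((hdx i k s hs).continuousAt.sub (hdxbar k s hs).continuousAt).pow 2)
  have hWcontAt : ∀ s : ℝ, 0 ≤ s → ContinuousAt W s := by
    intro s hs
    simp only [hWdef]
    refine tendsto_finset_sum _ fun i _ => ?_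
    have h : ContinuousAt (fun t => ∑ k, (x i t k - xbar t k)^2) s :=
      tendsto_finset_sum _ fun k _ =>
        (((hdx i k s hs).continuousAt.sub (hdxbar k s hs).continuousAt).pow 2)
    exact continuousAt_const.mul h
  set Us : ℝ → ℝ := fun t => U (max t 0) with hUsdef
  have hUsU : ∀ t, 0 ≤ t → Us t = U t := by
    intro t ht
    simp only [hUsdef]
    rw [max_eq_left ht]
  have hUscont : Continuous Us := by
    rw [continuous_iff_continuousAt]
    intro t
    have h5 : ContinuousAt (U ∘ fun s : ℝ => max s 0) t :=
      ContinuousAt.comp (hUcontAt _ (le_max_right _ _))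
        ((continuous_id.max continuous_const).continuousAt)
    exact h5
  have hPhid : ∀ T : ℝ, HasDerivAt (fun T => ∫ s in (0:ℝ)..T, Us s) (Us T) T := by
    intro T
    exact intervalIntegral.integral_hasDerivAt_right (hUscont.intervalIntegrable 0 T)
      (hUscont.stronglyMeasurableAtFilter _ _) hUscont.continuousAt
  have hpsianti : AntitoneOn (fun T => V T + (ϖ*ξmin) * ∫ s in (0:ℝ)..T, Us s) (Set.Ici 0) := by
    refine antitoneOn_of_deriv_nonpos (convex_Ici 0) ?_ ?_ ?_
    · intro u hu
      exact ((hdV u hu).continuousAt.add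
        ((hPhid u).const_mul (ϖ*ξmin)).continuousAt).continuousWithinAt
    · intro u hu
      rw [interior_Ici] at hu
      exact ((hdV u hu.le).add
        ((hPhid u).const_mul (ϖ*ξmin))).differentiableAt.differentiableWithinAt
    · intro u hu
      rw [interior_Ici] at hu
      rw [((hdV u hu.le).fun_add ((hPhid u).const_mul (ϖ*ξmin))).deriv]
      have h1 := hvle u hu.le
      rw [hUsU u hu.le]
      linarith
  have hIbd : ∀ T, 0 ≤ T → (∫ s in (0:ℝ)..T, Us s) ≤ V 0 / (ϖ*ξmin) := by
    intro T hT
    have h1 := hpsianti (Set.mem_Ici.mpr le_rfl) (Set.mem_Ici.mpr hT) hT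
    simp only [intervalIntegral.integral_same, mul_zero, add_zero] at h1
    have h2 := hVnn T
    rw [le_div_iff₀ (by positivity : (0:ℝ) < ϖ*ξmin)]
    clear_value V ξmin
    nlinarith
  -- Barbalat's argument applied to W
  have hwub : ∀ t, 0 ≤ t → wdot t ≤ 2*D*ξmax*(2*(V 0)/ξmin) + 1 := by
    intro t ht
    rw [hwsplit t ht]
    have b1 := hSfdle t ht
    have hFqnp : Fq t ≤ 0 := by
      have h1 := hFqle t
      have h2 : 0 ≤ (γmin * lamB) * U t :=
        mul_nonneg (mul_nonneg hγminpos.le hlamBpos.le) (hUnn t)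
      linarith
    have b2 : c t * Fq t ≤ 0 := mul_nonpos_of_nonneg_of_nonpos (hcnn t ht) hFqnp
    have b3 := hWleU t
    have b4 := hUb t ht
    have b5 := hWnn t
    have b6 : D * W t ≤ D * (ξmax * U t) := mul_le_mul_of_nonneg_left b3 hDnn
    have b7 : D * (ξmax * U t) ≤ D * ξmax * (2*(V 0)/ξmin) := by
      rw [← mul_assoc]
      exact mul_le_mul_of_nonneg_left b4 (mul_nonneg hDnn hξmaxpos.le)
    have b8 : 0 ≤ ϖ * W t := mul_nonneg hϖ.le b5
    clear_value W U V D ξmax ξmin Sfd Fq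
    nlinarith
  have hKpos : 0 < 2*D*ξmax*(2*(V 0)/ξmin) + 1 := by
    have h1 : 0 ≤ 2*D*ξmax*(2*(V 0)/ξmin) :=
      mul_nonneg (by positivity) (by positivity)
    linarith
  have hWint : ∀ T, 0 ≤ T → (∫ t in (0:ℝ)..T, W t) ≤ ξmax * ((V 0)/(ϖ*ξmin)) := by
    intro T hT
    have hcont : ContinuousOn W (Set.uIcc 0 T) := by
      intro u hu
      rw [Set.uIcc_of_le hT] at hu
      exact (hWcontAt u hu.1).continuousWithinAt
    have h1 : (∫ t in (0:ℝ)..T, W t) ≤ ∫ t in (0:ℝ)..T, ξmax * Us t := by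
      refine intervalIntegral.integral_mono_on hT hcont.intervalIntegrable
        ((continuous_const.mul hUscont).intervalIntegrable 0 T) ?_
      intro u hu
      rw [hUsU u hu.1]
      exact hWleU u
    rw [intervalIntegral.integral_const_mul] at h1
    have h2 := mul_le_mul_of_nonneg_left (hIbd T hT) hξmaxpos.le
    linarith
  have hWtend : Tendsto W atTop (nhds 0) :=
    barbalat_one_sided W wdot (2*D*ξmax*(2*(V 0)/ξmin) + 1) (ξmax * ((V 0)/(ϖ*ξmin)))
      hKpos hdW (fun t _ => hWnn t) hwub hWint
  -- conclusion
  refine ⟨?_, ⟨c₀, hc₀⟩⟩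
  intro i j
  have hbound : ∀ t, 0 ≤ t → ‖x i t - x j t‖ ≤ 2 * Real.sqrt (W t / ξmin) := by
    intro t ht
    have hs_nn : (0:ℝ) ≤ Real.sqrt (W t / ξmin) := Real.sqrt_nonneg _
    rw [pi_norm_le_iff_of_nonneg (by linarith)]
    intro k
    have hUWt : U t ≤ W t / ξmin := by
      rw [le_div_iff₀ hξminpos]
      have := hWgeU t
      linarith
    have hsingle : ∀ l : Fin N, (x l t k - xbar t k)^2 ≤ U t := by
      intro l
      calc (x l t k - xbar t k)^2 ≤ ∑ k', (x l t k' - xbar t k')^2 :=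
            Finset.single_le_sum (f := fun k' => (x l t k' - xbar t k')^2)
              (fun k' _ => sq_nonneg _) (Finset.mem_univ k)
        _ ≤ U t := by
            simp only [hUdef]
            exact Finset.single_le_sum (f := fun l' => ∑ k', (x l' t k' - xbar t k')^2)
              (fun l' _ => Finset.sum_nonneg fun k' _ => sq_nonneg _) (Finset.mem_univ l)
    have h1 : (x i t k - x j t k)^2 ≤ 4 * (W t / ξmin) := by
      have hik := le_trans (hsingle i) hUWt
      have hjk := le_trans (hsingle j) hUWt
      nlinarith [sq_nonneg ((x i t k - xbar t k) + (x j t k - xbar t k))]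
    have h2 : |x i t k - x j t k| ≤ 2 * Real.sqrt (W t / ξmin) := by
      have e4 : Real.sqrt (4 * (W t / ξmin)) = 2 * Real.sqrt (W t / ξmin) := by
        rw [show (4:ℝ) * (W t / ξmin) = 2^2 * (W t / ξmin) by ring,
          Real.sqrt_mul (by positivity) _, Real.sqrt_sq (by norm_num)]
      calc |x i t k - x j t k| = Real.sqrt ((x i t k - x j t k)^2) :=
            (Real.sqrt_sq_eq_abs _).symm
        _ ≤ Real.sqrt (4 * (W t / ξmin)) := Real.sqrt_le_sqrt h1
        _ = 2 * Real.sqrt (W t / ξmin) := e4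
    simpa [Real.norm_eq_abs] using h2
  have hsqt : Tendsto (fun t => 2 * Real.sqrt (W t / ξmin)) atTop (nhds 0) := by
    have h1 : Tendsto (fun t => W t / ξmin) atTop (nhds 0) := by
      simpa using hWtend.div_const ξmin
    have h2 : Tendsto (fun t => Real.sqrt (W t / ξmin)) atTop (nhds 0) := by
      have h3 := (Real.continuous_sqrt.tendsto 0).comp h1
      simpa using! h3
    have h4 := h2.const_mul (2:ℝ)
    simpa using h4
  refine squeeze_zero' ?_ ?_ hsqt
  · filter_upwards [eventually_ge_atTop (0:ℝ)] with t _
    exact norm_nonneg _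
  · filter_upwards [eventually_ge_atTop (0:ℝ)] with t ht
    exact hbound t ht
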